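/- For any real numbers λ1 ≠ 0 and γ1, ..., γ6, the bilinear antisymmetric bracket on R^4 with basis {u1, u2, u3, u4} determined by [u1, u2] = λ1·u3, [u1, u4] = γ1·u1 + γ2·u2 + γ3·u3, [u2, u4] = γ4·u1 + γ5·u2 + γ6·u3, [u3, u4] = (γ1 + γ5)·u3, and all other basis brackets zero, satisfies the Jacobi identity; moreover the span of {u1, u2, u3} is an ideal isomorphic to the Heisenberg algebra h3. -/

import Mathlib

noncomputable section

/-- The standard basis `u1, u2, u3, u4` of `ℝ⁴`. -/
def e4 (i : Fin 4) : Fin 4 → ℝ := Pi.single i 1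

set_option maxHeartbeats 1000000 in
/-- The brackets `[u1,u2] = λ1 u3`, `[u1,u4] = γ1 u1 + γ2 u2 + γ3 u3`,
`[u2,u4] = γ4 u1 + γ5 u2 + γ6 u3`, `[u3,u4] = (γ1+γ5) u3` (with `λ1 ≠ 0`) satisfy the
Jacobi identity; moreover in any Lie algebra realizing them, the span of `{u1,u2,u3}`
is a Lie ideal isomorphic to the Heisenberg algebra `h3`. -/
theorem semidirect_extension_jacobi_and_ideal
    (l1 γ1 γ2 γ3 γ4 γ5 γ6 : ℝ) (hl : l1 ≠ 0) :
    (∀ B : (Fin 4 → ℝ) →ₗ[ℝ] (Fin 4 → ℝ) →ₗ[ℝ] (Fin 4 → ℝ),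
      (∀ X Y, B X Y = - B Y X) →
      B (e4 0) (e4 1) = l1 • e4 2 →
      B (e4 0) (e4 2) = 0 → B (e4 1) (e4 2) = 0 →
      B (e4 0) (e4 3) = γ1 • e4 0 + γ2 • e4 1 + γ3 • e4 2 →
      B (e4 1) (e4 3) = γ4 • e4 0 + γ5 • e4 1 + γ6 • e4 2 →
      B (e4 2) (e4 3) = (γ1 + γ5) • e4 2 →
      ∀ X Y Z, B (B X Y) Z + B (B Y Z) X + B (B Z X) Y = 0) ∧
    (∀ (L : Type) [LieRing L] [LieAlgebra ℝ L] (b : Module.Basis (Fin 4) ℝ L),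
      ⁅b 0, b 1⁆ = l1 • b 2 →
      ⁅b 0, b 2⁆ = 0 → ⁅b 1, b 2⁆ = 0 →
      ⁅b 0, b 3⁆ = γ1 • b 0 + γ2 • b 1 + γ3 • b 2 →
      ⁅b 1, b 3⁆ = γ4 • b 0 + γ5 • b 1 + γ6 • b 2 →
      ⁅b 2, b 3⁆ = (γ1 + γ5) • b 2 →
      ∃ I : LieIdeal ℝ L,
        (I : Submodule ℝ L) = Submodule.span ℝ {b 0, b 1, b 2} ∧
        (∀ (H : Type) [LieRing H] [LieAlgebra ℝ H] (c : Module.Basis (Fin 3) ℝ H),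
          ⁅c 0, c 1⁆ = c 2 → ⁅c 0, c 2⁆ = 0 → ⁅c 1, c 2⁆ = 0 →
          Nonempty (I ≃ₗ⁅ℝ⁆ H))) := by
  constructor
  · intro B hanti h01 h02 h12 h03 h13 h23
    have hxx : ∀ X, B X X = 0 := by
      intro X
      have h2 : (2:ℝ) • B X X = 0 := by rw [two_smul]; nth_rewrite 1 [hanti X X]; simp
      exact (smul_eq_zero.mp h2).resolve_left (by norm_num)
    have h10 : B (e4 1) (e4 0) = -(l1 • e4 2) := by rw [hanti, h01]
    have h20 : B (e4 2) (e4 0) = 0 := by rw [hanti, h02, neg_zero]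
    have h21 : B (e4 2) (e4 1) = 0 := by rw [hanti, h12, neg_zero]
    have h30 : B (e4 3) (e4 0) = -(γ1 • e4 0 + γ2 • e4 1 + γ3 • e4 2) := by rw [hanti, h03]
    have h31 : B (e4 3) (e4 1) = -(γ4 • e4 0 + γ5 • e4 1 + γ6 • e4 2) := by rw [hanti, h13]
    have h32 : B (e4 3) (e4 2) = -((γ1 + γ5) • e4 2) := by rw [hanti, h23]
    have hS : ∀ W : Fin 4 → ℝ,
        W ∈ Submodule.span ℝ ({e4 0, e4 1, e4 2, e4 3} : Set (Fin 4 → ℝ)) := by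
      intro W
      have hw : W = W 0 • e4 0 + W 1 • e4 1 + W 2 • e4 2 + W 3 • e4 3 := by
        funext j; fin_cases j <;> simp [e4, Pi.single_apply]
      rw [hw]
      refine Submodule.add_mem _ (Submodule.add_mem _ (Submodule.add_mem _ ?_ ?_) ?_) ?_ <;>
        exact Submodule.smul_mem _ _ (Submodule.subset_span (by simp))
    intro X Y Z
    induction hS X using Submodule.span_induction with
    | zero => simp
    | add x y hx hy ihx ihy =>
        simp only [map_add, LinearMap.add_apply]
        linear_combination (norm := module) ihx + ihy
    | smul a x hx ih =>
        simp only [map_smul, LinearMap.smul_apply]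
        linear_combination (norm := module) a • ih
    | mem x hmx =>
        induction hS Y using Submodule.span_induction with
        | zero => simp
        | add y₁ y₂ h1 h2 ih1 ih2 =>
            simp only [map_add, LinearMap.add_apply]
            linear_combination (norm := module) ih1 + ih2
        | smul a y hy ih =>
            simp only [map_smul, LinearMap.smul_apply]
            linear_combination (norm := module) a • ih
        | mem y hmy =>
            induction hS Z using Submodule.span_induction with
            | zero => simp
            | add z₁ z₂ h1 h2 ih1 ih2 =>
                simp only [map_add, LinearMap.add_apply]
                linear_combination (norm := module) ih1 + ih2
            | smul a z hz ih =>
                simp only [map_smul, LinearMap.smul_apply]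
                linear_combination (norm := module) a • ih
            | mem z hmz =>
                simp only [Set.mem_insert_iff, Set.mem_singleton_iff] at hmx hmy hmz
                rcases hmx with rfl|rfl|rfl|rfl <;> rcases hmy with rfl|rfl|rfl|rfl <;>
                  rcases hmz with rfl|rfl|rfl|rfl <;>
                  simp only [hxx, h01, h02, h12, h03, h13, h23, h10, h20, h21, h30, h31, h32,
                    map_add, map_smul, map_neg, map_zero, LinearMap.add_apply, LinearMap.smul_apply,
                    LinearMap.neg_apply, LinearMap.zero_apply, smul_zero, neg_zero, add_zero,
                    zero_add, smul_neg] <;>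
                  module
  · intro L _ _ b hb01 hb02 hb12 hb03 hb13 hb23
    have hb0S : b 0 ∈ Submodule.span ℝ ({b 0, b 1, b 2} : Set L) :=
      Submodule.subset_span (by simp)
    have hb1S : b 1 ∈ Submodule.span ℝ ({b 0, b 1, b 2} : Set L) :=
      Submodule.subset_span (by simp)
    have hb2S : b 2 ∈ Submodule.span ℝ ({b 0, b 1, b 2} : Set L) :=
      Submodule.subset_span (by simp)
    have hb10 : ⁅b 1, b 0⁆ = -(l1 • b 2) := by rw [← lie_skew, hb01]
    have hb20 : ⁅b 2, b 0⁆ = 0 := by rw [← lie_skew, hb02, neg_zero]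
    have hb21 : ⁅b 2, b 1⁆ = 0 := by rw [← lie_skew, hb12, neg_zero]
    have hb30 : ⁅b 3, b 0⁆ = -(γ1 • b 0 + γ2 • b 1 + γ3 • b 2) := by rw [← lie_skew, hb03]
    have hb31 : ⁅b 3, b 1⁆ = -(γ4 • b 0 + γ5 • b 1 + γ6 • b 2) := by rw [← lie_skew, hb13]
    have hb32 : ⁅b 3, b 2⁆ = -((γ1 + γ5) • b 2) := by rw [← lie_skew, hb23]
    have hlie : ∀ (x m : L), m ∈ Submodule.span ℝ ({b 0, b 1, b 2} : Set L) →
        ⁅x, m⁆ ∈ Submodule.span ℝ ({b 0, b 1, b 2} : Set L) := by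
      intro x m hm
      induction hm using Submodule.span_induction with
      | zero => simp
      | add m₁ m₂ h1 h2 ih1 ih2 => rw [lie_add]; exact Submodule.add_mem _ ih1 ih2
      | smul a m hm ih => rw [lie_smul]; exact Submodule.smul_mem _ _ ih
      | mem m hmm =>
          have hx : x ∈ Submodule.span ℝ (Set.range b) := by rw [b.span_eq]; trivial
          induction hx using Submodule.span_induction with
          | zero => simp
          | add x₁ x₂ h1 h2 ih1 ih2 => rw [add_lie]; exact Submodule.add_mem _ ih1 ih2
          | smul a x hx ih => rw [smul_lie]; exact Submodule.smul_mem _ _ ih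
          | mem x hmx =>
              obtain ⟨i, rfl⟩ := hmx
              have hi : i = 0 ∨ i = 1 ∨ i = 2 ∨ i = 3 := by omega
              simp only [Set.mem_insert_iff, Set.mem_singleton_iff] at hmm
              rcases hi with rfl|rfl|rfl|rfl <;> rcases hmm with rfl|rfl|rfl <;>
                simp only [lie_self, hb01, hb02, hb12, hb10, hb20, hb21, hb30, hb31, hb32] <;>
                first
                  | exact Submodule.zero_mem _
                  | exact Submodule.smul_mem _ _ hb2S
                  | exact Submodule.neg_mem _ (Submodule.smul_mem _ _ hb2S)
                  | exact Submodule.neg_mem _ (Submodule.add_mem _ (Submodule.add_mem _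
                      (Submodule.smul_mem _ _ hb0S) (Submodule.smul_mem _ _ hb1S))
                      (Submodule.smul_mem _ _ hb2S))
    refine ⟨{ Submodule.span ℝ ({b 0, b 1, b 2} : Set L) with
              lie_mem := fun {x m} hm => hlie x m hm }, rfl, ?_⟩
    intro H _ _ c hc01 hc02 hc12
    set S := Submodule.span ℝ ({b 0, b 1, b 2} : Set L) with hSdef
    set I : LieIdeal ℝ L := { S with lie_mem := fun {x m} hm => hlie x m hm } with hIdef
    -- basis of the ideal
    let f : Fin 3 → Fin 4 := ![0, 1, 2]
    have hfinj : Function.Injective f := by decide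
    let v : Fin 3 → L := b ∘ f
    have hli : LinearIndependent ℝ v := b.linearIndependent.comp f hfinj
    have hrange : Set.range v = ({b 0, b 1, b 2} : Set L) := by
      ext x
      constructor
      · rintro ⟨i, rfl⟩
        fin_cases i <;> simp [v, f]
      · rintro (rfl | rfl | rfl)
        exacts [⟨0, rfl⟩, ⟨1, rfl⟩, ⟨2, rfl⟩]
    have hspan : Submodule.span ℝ (Set.range v) = S := by rw [hrange]
    let bI : Module.Basis (Fin 3) ℝ I :=
      (Module.Basis.span hli).map (LinearEquiv.ofEq _ _ hspan)
    have hbI : ∀ i, ((bI i : I) : L) = v i := by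
      intro i
      show ((LinearEquiv.ofEq _ _ hspan) (Module.Basis.span hli i) : L) = v i
      rw [LinearEquiv.coe_ofEq_apply]
      exact congrArg Subtype.val (Module.Basis.span_apply hli i)
    have hcoeI : ∀ x y : I, ((⁅x, y⁆ : I) : L) = ⁅(x : L), (y : L)⁆ := fun x y => rfl
    have hinj : Function.Injective ((↑) : I → L) := Subtype.coe_injective
    -- rescaled basis of H
    let u : Fin 3 → ℝˣ := ![1, 1, (Units.mk0 l1 hl)⁻¹]
    let c' : Module.Basis (Fin 3) ℝ H := c.unitsSMul u
    have hc'0 : c' 0 = c 0 := by simp [c', u, Module.Basis.unitsSMul_apply]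
    have hc'1 : c' 1 = c 1 := by simp [c', u, Module.Basis.unitsSMul_apply]
    have hc'2 : c' 2 = l1⁻¹ • c 2 := by
      simp [c', u, Module.Basis.unitsSMul_apply, Units.smul_def]
    let e : I ≃ₗ[ℝ] H := bI.equiv c' (Equiv.refl _)
    have he : ∀ i, e (bI i) = c' i := fun i => bI.equiv_apply i c' (Equiv.refl _)
    -- brackets of the ideal basis
    have hI01 : ⁅bI 0, bI 1⁆ = l1 • bI 2 := by
      apply hinj
      rw [hcoeI]
      simp only [hbI]
      show ⁅b 0, b 1⁆ = ((l1 • bI 2 : I) : L)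
      rw [hb01, Submodule.coe_smul, hbI]
      rfl
    have hI02 : ⁅bI 0, bI 2⁆ = 0 := by
      apply hinj
      rw [hcoeI]
      simp only [hbI]
      show ⁅b 0, b 2⁆ = ((0 : I) : L)
      rw [hb02]; rfl
    have hI12 : ⁅bI 1, bI 2⁆ = 0 := by
      apply hinj
      rw [hcoeI]
      simp only [hbI]
      show ⁅b 1, b 2⁆ = ((0 : I) : L)
      rw [hb12]; rfl
    -- the two bilinear maps agree on the basis
    let P : I →ₗ[ℝ] I →ₗ[ℝ] H := LinearMap.mk₂ ℝ (fun x y => e ⁅x, y⁆)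
      (fun x₁ x₂ y => by simp only [add_lie, map_add])
      (fun a x y => by simp only [smul_lie, map_smul])
      (fun x y₁ y₂ => by simp only [lie_add, map_add])
      (fun a x y => by simp only [lie_smul, map_smul])
    let Q : I →ₗ[ℝ] I →ₗ[ℝ] H := LinearMap.mk₂ ℝ (fun x y => ⁅e x, e y⁆)
      (fun x₁ x₂ y => by simp only [map_add, add_lie])
      (fun a x y => by simp only [map_smul, smul_lie])
      (fun x y₁ y₂ => by simp only [map_add, lie_add])
      (fun a x y => by simp only [map_smul, lie_smul])
    have hPQ : P = Q := by
      apply LinearMap.ext_basis bI bI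
      intro i j
      have hI10 : ⁅bI 1, bI 0⁆ = -(l1 • bI 2) := by rw [← lie_skew, hI01]
      have hI20 : ⁅bI 2, bI 0⁆ = 0 := by rw [← lie_skew, hI02, neg_zero]
      have hI21 : ⁅bI 2, bI 1⁆ = 0 := by rw [← lie_skew, hI12, neg_zero]
      have hc10 : ⁅c' 1, c' 0⁆ = -c 2 := by rw [← lie_skew, hc'0, hc'1, hc01]
      have hc20 : ⁅c 2, c 0⁆ = 0 := by rw [← lie_skew, hc02, neg_zero]
      have hc21 : ⁅c 2, c 1⁆ = 0 := by rw [← lie_skew, hc12, neg_zero]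
      have hi3 : i = 0 ∨ i = 1 ∨ i = 2 := by omega
      have hj3 : j = 0 ∨ j = 1 ∨ j = 2 := by omega
      rcases hi3 with rfl|rfl|rfl <;> rcases hj3 with rfl|rfl|rfl <;>
        simp only [P, Q, LinearMap.mk₂_apply, lie_self, hI01, hI02, hI12, hI10, hI20, hI21,
          map_zero, map_smul, map_neg, he, hc'0, hc'1, hc'2, hc01, hc02, hc12, hc10,
          hc20, hc21, lie_smul, smul_lie, smul_zero, neg_zero, smul_neg, smul_smul,
          inv_mul_cancel₀ hl, mul_inv_cancel₀ hl, one_smul] <;>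
        rw [show ⁅c 1, c 0⁆ = -c 2 by rw [← lie_skew, hc01]]
    have hmaplie : ∀ x y : I, e ⁅x, y⁆ = ⁅e x, e y⁆ := by
      intro x y
      have h1 := DFunLike.congr_fun (DFunLike.congr_fun hPQ x) y
      simpa [P, Q] using h1
    exact ⟨{ e with map_lie' := fun {x y} => hmaplie x y }⟩
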